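/- For ζ ∈ (0,1) set g(ζ) = 2ζ/(1−ζ²) + ln((1−ζ)/(1+ζ)). Then g(ζ) > 0 on (0,1), and for any constant C ∈ ℝ the function f(ζ) = C · g(ζ)^{1/3} is twice differentiable on (0,1) and satisfies the ordinary differential equation ( f''(ζ)·f(ζ)² + 2·f'(ζ)²·f(ζ) )·ζ·(1−ζ²) − 2·f'(ζ)·f(ζ)²·(1+ζ²) = 0 for all ζ ∈ (0,1). (This is the reduced Euler–Lagrange equation for the SO(3)-equivariant σ₃-critical extended Hwa–Bjorken field.) -/

import Mathlib

open scoped BigOperators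

noncomputable section

/-- `g(ζ) = 2ζ/(1−ζ²) + ln((1−ζ)/(1+ζ))`. -/
def gHB (ζ : ℝ) : ℝ := 2 * ζ / (1 - ζ ^ 2) + Real.log ((1 - ζ) / (1 + ζ))

/-- `f(ζ) = C · g(ζ)^{1/3}` (real cube root of the positive number `g(ζ)`). -/
def fHB (C : ℝ) (ζ : ℝ) : ℝ := C * gHB ζ ^ ((1 : ℝ) / 3)

lemma hasDerivAt_gHB {ζ : ℝ} (h1 : -1 < ζ) (h2 : ζ < 1) :
    HasDerivAt gHB (4 * ζ ^ 2 / (1 - ζ ^ 2) ^ 2) ζ := by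
  have hm : (0:ℝ) < 1 - ζ := by linarith
  have hp : (0:ℝ) < 1 + ζ := by linarith
  have hne : (1:ℝ) - ζ ^ 2 ≠ 0 := by nlinarith
  have heq : gHB =ᶠ[nhds ζ]
      fun x => 2 * x / (1 - x ^ 2) + (Real.log (1 - x) - Real.log (1 + x)) := by
    filter_upwards [eventually_lt_nhds h2, eventually_gt_nhds h1] with x hx1 hx2
    have : (0:ℝ) < 1 - x := by linarith
    have : (0:ℝ) < 1 + x := by linarith
    unfold gHB
    rw [Real.log_div (by linarith) (by linarith)]
  have hd : HasDerivAt (fun x : ℝ => 1 - x ^ 2) (-(2 * ζ ^ 1)) ζ := by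
    simpa using (hasDerivAt_pow 2 ζ).const_sub 1
  have hn : HasDerivAt (fun x : ℝ => 2 * x) 2 ζ := by
    simpa using (hasDerivAt_id ζ).const_mul 2
  have d1 := hn.div hd hne
  have dm : HasDerivAt (fun x : ℝ => 1 - x) (-1) ζ := by
    simpa using (hasDerivAt_id ζ).const_sub 1
  have dp : HasDerivAt (fun x : ℝ => 1 + x) 1 ζ := by
    simpa using (hasDerivAt_id ζ).const_add 1
  have d2 := dm.log hm.ne'
  have d3 := dp.log hp.ne'
  have := (d1.add (d2.sub d3)).congr_of_eventuallyEq heq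
  refine this.congr_deriv ?_
  have h1' : (1:ℝ) - ζ ≠ 0 := hm.ne'
  have h2' : (1:ℝ) + ζ ≠ 0 := hp.ne'
  field_simp
  ring

lemma gHB_pos {ζ : ℝ} (h1 : 0 < ζ) (h2 : ζ < 1) : 0 < gHB ζ := by
  have hmono : StrictMonoOn gHB (Set.Ico 0 1) := by
    apply strictMonoOn_of_deriv_pos (convex_Ico 0 1)
    · intro x hx
      exact ((hasDerivAt_gHB (by linarith [hx.1]) hx.2).differentiableAt).continuousAt.continuousWithinAt
    · intro x hx
      rw [interior_Ico] at hx
      rw [(hasDerivAt_gHB (by linarith [hx.1]) hx.2).deriv]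
      have hx0 : (0:ℝ) < x := hx.1
      have hne : (1:ℝ) - x ^ 2 ≠ 0 := by nlinarith [hx.2]
      positivity
  have h0 : gHB 0 = 0 := by norm_num [gHB]
  have := hmono (Set.mem_Ico.2 ⟨le_refl 0, one_pos⟩) (Set.mem_Ico.2 ⟨h1.le, h2⟩) h1
  linarith [this]

/-- The first derivative of `fHB C` on `(0,1)`. -/
def F1 (C : ℝ) (ζ : ℝ) : ℝ :=
  C * (4 * ζ ^ 2 / (1 - ζ ^ 2) ^ 2 * ((1:ℝ)/3) * gHB ζ ^ ((1:ℝ)/3 - 1))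

lemma hasDerivAt_fHB (C : ℝ) {ζ : ℝ} (h1 : 0 < ζ) (h2 : ζ < 1) :
    HasDerivAt (fHB C) (F1 C ζ) ζ :=
  (((hasDerivAt_gHB (by linarith) h2).rpow_const
    (Or.inl (gHB_pos h1 h2).ne')).const_mul C)

lemma hasDerivAt_F1 (C : ℝ) {ζ : ℝ} (h1 : 0 < ζ) (h2 : ζ < 1) :
    HasDerivAt (F1 C)
      (C * ((4 * (2 * ζ ^ 1) * (1 - ζ ^ 2) ^ 2
              - 4 * ζ ^ 2 * (2 * (1 - ζ ^ 2) ^ 1 * (-(2 * ζ ^ 1)))) / ((1 - ζ ^ 2) ^ 2) ^ 2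
            * ((1:ℝ)/3) * gHB ζ ^ ((1:ℝ)/3 - 1)
          + 4 * ζ ^ 2 / (1 - ζ ^ 2) ^ 2 * ((1:ℝ)/3)
            * (4 * ζ ^ 2 / (1 - ζ ^ 2) ^ 2 * ((1:ℝ)/3 - 1) * gHB ζ ^ ((1:ℝ)/3 - 1 - 1)))) ζ := by
  have hne : (1:ℝ) - ζ ^ 2 ≠ 0 := by nlinarith
  have hd : HasDerivAt (fun x : ℝ => 1 - x ^ 2) (-(2 * ζ ^ 1)) ζ := by
    simpa using (hasDerivAt_pow 2 ζ).const_sub 1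
  have hden : HasDerivAt (fun x : ℝ => (1 - x ^ 2) ^ 2)
      (2 * (1 - ζ ^ 2) ^ 1 * (-(2 * ζ ^ 1))) ζ := hd.pow 2
  have hnum : HasDerivAt (fun x : ℝ => 4 * x ^ 2) (4 * (2 * ζ ^ 1)) ζ :=
    (hasDerivAt_pow 2 ζ).const_mul 4
  have hA := (hnum.div hden (pow_ne_zero 2 hne)).mul_const ((1:ℝ)/3)
  have hB := (hasDerivAt_gHB (by linarith) h2).rpow_const (p := (1:ℝ)/3 - 1)
    (Or.inl (gHB_pos h1 h2).ne')
  have h := (hA.mul hB).const_mul C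
  unfold F1
  exact h

/-- `g > 0` on `(0,1)`, and `f = C·g^{1/3}` is twice
differentiable on `(0,1)` and solves the reduced Euler–Lagrange ODE
`(f''·f² + 2·f'²·f)·ζ·(1−ζ²) − 2·f'·f²·(1+ζ²) = 0`. -/
theorem statement16 (C : ℝ) :
    (∀ ζ ∈ Set.Ioo (0 : ℝ) 1, 0 < gHB ζ) ∧
    ∀ ζ ∈ Set.Ioo (0 : ℝ) 1,
      DifferentiableAt ℝ (fHB C) ζ ∧
      DifferentiableAt ℝ (deriv (fHB C)) ζ ∧
      (deriv (deriv (fHB C)) ζ * fHB C ζ ^ 2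
          + 2 * (deriv (fHB C) ζ) ^ 2 * fHB C ζ) * ζ * (1 - ζ ^ 2)
        - 2 * deriv (fHB C) ζ * fHB C ζ ^ 2 * (1 + ζ ^ 2) = 0 := by
  refine ⟨fun ζ hζ => gHB_pos hζ.1 hζ.2, fun ζ hζ => ?_⟩
  obtain ⟨h1, h2⟩ := hζ
  have hg := gHB_pos h1 h2
  have hne : (1:ℝ) - ζ ^ 2 ≠ 0 := by nlinarith
  have hF := hasDerivAt_fHB C h1 h2
  have heq : deriv (fHB C) =ᶠ[nhds ζ] F1 C := by
    filter_upwards [Ioo_mem_nhds h1 h2] with x hx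
    exact (hasDerivAt_fHB C hx.1 hx.2).deriv
  have hF2 := (hasDerivAt_F1 C h1 h2).congr_of_eventuallyEq heq
  refine ⟨hF.differentiableAt, hF2.differentiableAt, ?_⟩
  rw [hF2.deriv, hF.deriv]
  unfold F1 fHB
  set G := gHB ζ with hGdef
  set u := G ^ ((1:ℝ)/3) with hu_def
  have hu : u ^ 3 = G := by
    rw [hu_def, ← Real.rpow_natCast (G ^ ((1:ℝ)/3)) 3, ← Real.rpow_mul hg.le]
    norm_num
  have hupos : 0 < u := Real.rpow_pos_of_pos hg _
  have e1 : G ^ ((1:ℝ)/3 - 1) = u / G := by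
    rw [Real.rpow_sub hg, Real.rpow_one]
  have e2 : G ^ ((1:ℝ)/3 - 1 - 1) = u / G / G := by
    rw [Real.rpow_sub hg, Real.rpow_sub hg, Real.rpow_one]
  rw [e1, e2, ← hu]
  field_simp
  ring
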